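/- Let p ∈ (1, ∞) and λ ≤ 0, and set φ(x) = −(1/p)|λ|^{p-1}|x|^p on ℝ^d. Then φ is p-concave, i.e. the double p-transform satisfies (φ^p)^p = φ. -/

import Mathlib

open Real Set

private lemma rpow_pred_mul {x : ℝ} (hx : 0 < x) (p : ℝ) :
    x ^ (p - 1) * x = x ^ p := by
  nth_rewrite 2 [← Real.rpow_one x]
  rw [← Real.rpow_add hx]; ring_nf

private lemma scalar_key {p a s t : ℝ} (hp : 1 < p) (ha : 0 < a)
    (hs : 0 ≤ s) (hst : s ≤ t) :
    (a / (1 + a)) ^ (p - 1) * t ^ p ≤ (t - s) ^ p + a ^ (p - 1) * s ^ p := by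
  have h1a : (0:ℝ) < 1 + a := by linarith
  have hts : 0 ≤ t - s := by linarith
  have hw : a / (1 + a) + 1 / (1 + a) = 1 := by field_simp; ring
  have hq : (0:ℝ) ≤ (1 + a) / a := by positivity
  have hcx := (convexOn_rpow hp.le).2
    (mem_Ici.mpr (show (0:ℝ) ≤ (1 + a) / a * (t - s) by positivity))
    (mem_Ici.mpr (show (0:ℝ) ≤ (1 + a) * s by positivity))
    (le_of_lt (div_pos ha h1a)) (le_of_lt (div_pos one_pos h1a)) hw
  simp only [smul_eq_mul] at hcx
  have hptt : a / (1 + a) * ((1 + a) / a * (t - s)) + 1 / (1 + a) * ((1 + a) * s) = t := by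
    field_simp; ring
  rw [hptt, Real.mul_rpow hq hts, Real.mul_rpow h1a.le hs] at hcx
  have hk : (0:ℝ) < (a / (1 + a)) ^ (p - 1) := by positivity
  have hmul := mul_le_mul_of_nonneg_left hcx hk.le
  have hq1 : ((1 + a) / a) ^ p = ((1 + a) / a) ^ (p - 1) * ((1 + a) / a) :=
    (rpow_pred_mul (div_pos h1a ha) p).symm
  have hr1 : (1 + a) ^ p = (1 + a) ^ (p - 1) * (1 + a) := (rpow_pred_mul h1a p).symm
  have hkq : (a / (1 + a)) ^ (p - 1) * ((1 + a) / a) ^ (p - 1) = 1 := by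
    rw [← Real.mul_rpow (by positivity) hq,
      show a / (1 + a) * ((1 + a) / a) = 1 by field_simp, Real.one_rpow]
  have hkr : (a / (1 + a)) ^ (p - 1) * (1 + a) ^ (p - 1) = a ^ (p - 1) := by
    rw [← Real.mul_rpow (by positivity) h1a.le, show a / (1 + a) * (1 + a) = a by field_simp]
  calc (a / (1 + a)) ^ (p - 1) * t ^ p
      ≤ (a / (1 + a)) ^ (p - 1) *
        (a / (1 + a) * (((1 + a) / a) ^ p * (t - s) ^ p) +
          1 / (1 + a) * ((1 + a) ^ p * s ^ p)) := hmul
    _ = ((a / (1 + a)) ^ (p - 1) * ((1 + a) / a) ^ (p - 1)) *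
          (a / (1 + a) * ((1 + a) / a)) * (t - s) ^ p +
        ((a / (1 + a)) ^ (p - 1) * (1 + a) ^ (p - 1)) * (1 / (1 + a) * (1 + a)) * s ^ p := by
        rw [hq1, hr1]; ring
    _ = (t - s) ^ p + a ^ (p - 1) * s ^ p := by
        rw [hkq, hkr, show a / (1 + a) * ((1 + a) / a) = 1 by field_simp,
          show (1:ℝ) / (1 + a) * (1 + a) = 1 by field_simp]; ring

private lemma vec_key {d : ℕ} {p a : ℝ} (hp : 1 < p) (ha : 0 ≤ a)
    (u w : EuclideanSpace ℝ (Fin d)) :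
    (a / (1 + a)) ^ (p - 1) * ‖w‖ ^ p ≤ ‖u - w‖ ^ p + a ^ (p - 1) * ‖u‖ ^ p := by
  have hp1 : (0:ℝ) ≤ p - 1 := by linarith
  rcases ha.lt_or_eq with ha' | rfl
  · rcases le_or_gt ‖u‖ ‖w‖ with h | h
    · have h1 : ‖w‖ - ‖u‖ ≤ ‖u - w‖ := by
        calc ‖w‖ - ‖u‖ ≤ ‖w - u‖ := norm_sub_norm_le w u
        _ = ‖u - w‖ := norm_sub_rev w u
      have key := scalar_key hp ha' (norm_nonneg u) h
      have h2 : (‖w‖ - ‖u‖) ^ p ≤ ‖u - w‖ ^ p :=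
        Real.rpow_le_rpow (by linarith) h1 (by linarith)
      linarith
    · have h1 : (a / (1 + a)) ^ (p - 1) ≤ a ^ (p - 1) :=
        Real.rpow_le_rpow (by positivity) (div_le_self ha'.le (by linarith)) hp1
      have h2 : ‖w‖ ^ p ≤ ‖u‖ ^ p := Real.rpow_le_rpow (norm_nonneg w) h.le (by linarith)
      have h3 : (0:ℝ) ≤ ‖u - w‖ ^ p := by positivity
      have h4 : (a / (1 + a)) ^ (p - 1) * ‖w‖ ^ p ≤ a ^ (p - 1) * ‖u‖ ^ p :=
        mul_le_mul h1 h2 (by positivity) (by positivity)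
      linarith
  · simp only [zero_div, Real.zero_rpow (by linarith : p - 1 ≠ 0), zero_mul]
    positivity

private lemma T1 {d : ℕ} {p a : ℝ} (hp : 1 < p) (ha : 0 ≤ a)
    (y : EuclideanSpace ℝ (Fin d)) :
    sInf {v : ℝ | ∃ x, v = 1 / p * ‖x - y‖ ^ p - -(1 / p) * a ^ (p - 1) * ‖x‖ ^ p}
      = 1 / p * (a / (1 + a)) ^ (p - 1) * ‖y‖ ^ p := by
  have h1a : (0:ℝ) < 1 + a := by linarith
  have hp0 : (0:ℝ) < 1 / p := by positivity
  apply IsLeast.csInf_eq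
  constructor
  · refine ⟨(1 + a)⁻¹ • y, ?_⟩
    have h1 : ‖(1 + a)⁻¹ • y - y‖ = a / (1 + a) * ‖y‖ := by
      rw [show (1 + a)⁻¹ • y - y = ((1 + a)⁻¹ - 1) • y by rw [sub_smul, one_smul],
        norm_smul, Real.norm_eq_abs,
        show (1 + a)⁻¹ - 1 = -(a / (1 + a)) by field_simp; ring, abs_neg,
        abs_of_nonneg (by positivity)]
    have h2 : ‖(1 + a)⁻¹ • y‖ = 1 / (1 + a) * ‖y‖ := by
      rw [norm_smul, Real.norm_eq_abs, abs_of_pos (by positivity), one_div]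
    have hid : (a / (1 + a)) ^ p + a ^ (p - 1) * (1 / (1 + a)) ^ p
        = (a / (1 + a)) ^ (p - 1) := by
      rcases ha.lt_or_eq with ha' | rfl
      · have e1 : (a / (1 + a)) ^ p = (a / (1 + a)) ^ (p - 1) * (a / (1 + a)) :=
          (rpow_pred_mul (by positivity) p).symm
        have e2 : (1 / (1 + a)) ^ p = (1 / (1 + a)) ^ (p - 1) * (1 / (1 + a)) :=
          (rpow_pred_mul (by positivity) p).symm
        have e3 : a ^ (p - 1) * (1 / (1 + a)) ^ (p - 1) = (a / (1 + a)) ^ (p - 1) := by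
          rw [← Real.mul_rpow ha (by positivity),
            show a * (1 / (1 + a)) = a / (1 + a) by field_simp]
        rw [e1, e2, ← mul_assoc, e3]
        field_simp; ring
      · simp [Real.zero_rpow (by positivity : (0:ℝ) < p).ne',
          Real.zero_rpow (by linarith : p - 1 ≠ 0)]
    rw [h1, h2, Real.mul_rpow (by positivity) (norm_nonneg y),
      Real.mul_rpow (by positivity) (norm_nonneg y)]
    have := congrArg (fun r => 1 / p * r * ‖y‖ ^ p) hid.symm
    rw [this]; ring
  · rintro v ⟨x, rfl⟩
    have key := vec_key hp ha x y
    have h := mul_le_mul_of_nonneg_left key hp0.le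
    ring_nf at h ⊢
    linarith

private lemma T2 {d : ℕ} {p a : ℝ} (hp : 1 < p) (ha : 0 ≤ a)
    (y : EuclideanSpace ℝ (Fin d)) :
    sInf {v : ℝ | ∃ x, v = 1 / p * ‖x - y‖ ^ p - 1 / p * (a / (1 + a)) ^ (p - 1) * ‖x‖ ^ p}
      = -(1 / p) * a ^ (p - 1) * ‖y‖ ^ p := by
  have h1a : (0:ℝ) < 1 + a := by linarith
  have hp0 : (0:ℝ) < 1 / p := by positivity
  apply IsLeast.csInf_eq
  constructor
  · refine ⟨(1 + a) • y, ?_⟩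
    have h1 : ‖(1 + a) • y - y‖ = a * ‖y‖ := by
      rw [show (1 + a) • y - y = (1 + a - 1) • y by rw [sub_smul, one_smul],
        show (1:ℝ) + a - 1 = a by ring,
        norm_smul, Real.norm_eq_abs, abs_of_nonneg ha]
    have h2 : ‖(1 + a) • y‖ = (1 + a) * ‖y‖ := by
      rw [norm_smul, Real.norm_eq_abs, abs_of_pos h1a]
    have hid : a ^ p - (a / (1 + a)) ^ (p - 1) * (1 + a) ^ p = -(a ^ (p - 1)) := by
      rcases ha.lt_or_eq with ha' | rfl
      · have e1 : a ^ p = a ^ (p - 1) * a := (rpow_pred_mul ha' p).symm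
        have e2 : (1 + a) ^ p = (1 + a) ^ (p - 1) * (1 + a) := (rpow_pred_mul h1a p).symm
        have e3 : (a / (1 + a)) ^ (p - 1) * (1 + a) ^ (p - 1) = a ^ (p - 1) := by
          rw [← Real.mul_rpow (by positivity) h1a.le,
            show a / (1 + a) * (1 + a) = a by field_simp]
        rw [e1, e2, show (a / (1 + a)) ^ (p - 1) * ((1 + a) ^ (p - 1) * (1 + a))
            = (a / (1 + a)) ^ (p - 1) * (1 + a) ^ (p - 1) * (1 + a) by ring, e3]
        ring
      · simp [Real.zero_rpow (by positivity : (0:ℝ) < p).ne',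
          Real.zero_rpow (by linarith : p - 1 ≠ 0)]
    rw [h1, h2, Real.mul_rpow ha (norm_nonneg y),
      Real.mul_rpow h1a.le (norm_nonneg y)]
    have := congrArg (fun r => 1 / p * r * ‖y‖ ^ p) hid.symm
    calc -(1 / p) * a ^ (p - 1) * ‖y‖ ^ p
        = 1 / p * (a ^ p - (a / (1 + a)) ^ (p - 1) * (1 + a) ^ p) * ‖y‖ ^ p := by
          rw [hid]; ring
      _ = 1 / p * (a ^ p * ‖y‖ ^ p)
          - 1 / p * (a / (1 + a)) ^ (p - 1) * ((1 + a) ^ p * ‖y‖ ^ p) := by ring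
  · rintro v ⟨x, rfl⟩
    have key := vec_key hp ha y x
    rw [norm_sub_rev y x] at key
    have h := mul_le_mul_of_nonneg_left key hp0.le
    ring_nf at h ⊢
    linarith

/-- `φ(x) = -(1/p)|λ|^{p-1}|x|^p` with `λ ≤ 0` is `p`-concave: its double
`p`-transform equals itself. -/
theorem pconcave_of_neg_power
    (d : ℕ) (p lam : ℝ) (hp : 1 < p) (hlam : lam ≤ 0)
    (φ : EuclideanSpace ℝ (Fin d) → ℝ)
    (hφ : ∀ x, φ x = -(1 / p) * |lam| ^ (p - 1) * ‖x‖ ^ p)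
    (ptransform : (EuclideanSpace ℝ (Fin d) → ℝ) → EuclideanSpace ℝ (Fin d) → ℝ)
    (hpt : ∀ f y, ptransform f y =
      sInf {v : ℝ | ∃ x, v = (1 / p) * ‖x - y‖ ^ p - f x}) :
    ptransform (ptransform φ) = φ := by
  have ha : (0:ℝ) ≤ |lam| := abs_nonneg lam
  have hPT : ∀ x, ptransform φ x
      = 1 / p * (|lam| / (1 + |lam|)) ^ (p - 1) * ‖x‖ ^ p := by
    intro x
    rw [hpt]
    have hset : {v : ℝ | ∃ z, v = 1 / p * ‖z - x‖ ^ p - φ z}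
        = {v : ℝ | ∃ z, v = 1 / p * ‖z - x‖ ^ p - -(1 / p) * |lam| ^ (p - 1) * ‖z‖ ^ p} := by
      ext v; simp only [mem_setOf_eq]
      constructor <;> rintro ⟨z, rfl⟩ <;> exact ⟨z, by rw [hφ]⟩
    rw [hset, T1 hp ha]
  funext y
  rw [hpt]
  have hset : {v : ℝ | ∃ x, v = 1 / p * ‖x - y‖ ^ p - ptransform φ x}
      = {v : ℝ | ∃ x, v = 1 / p * ‖x - y‖ ^ p
          - 1 / p * (|lam| / (1 + |lam|)) ^ (p - 1) * ‖x‖ ^ p} := by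
    ext v; simp only [mem_setOf_eq]
    constructor <;> rintro ⟨z, rfl⟩ <;> exact ⟨z, by rw [hPT]⟩
  rw [hset, T2 hp ha, hφ]
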